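/- Lemma 3.2: Fix a profile (f_1,…,f_n) of piecewise constant value density functions on [0,1]. Every weakly MNW allocation A of the cake [0,1] satisfies v_1(A_1) ≤ w, where w is the common value received by agent 1 in MNW allocations with respect to (f_1,…,f_n); moreover this bound is attained, since every MNW allocation is weakly MNW. In other words, the maximum value that agent 1 receives among all weakly MNW allocations equals the value agent 1 receives in an MNW allocation. -/

import Mathlib

open MeasureTheory Set

noncomputable def cakeval (f : ℝ → ℝ) (S : Set ℝ) : ℝ := ∫ x in S, f x

def PiecewiseConstant (f : ℝ → ℝ) : Prop :=
  ∃ (m : ℕ) (a : Fin (m + 1) → ℝ) (c : Fin m → ℝ),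
    a 0 = 0 ∧ a (Fin.last m) = 1 ∧ Monotone a ∧
    ∀ t : Fin m, ∀ x ∈ Set.Ico (a t.castSucc) (a t.succ), f x = c t

def ValidDensity (f : ℝ → ℝ) : Prop :=
  PiecewiseConstant f ∧ (∀ x, 0 ≤ f x) ∧ 0 < cakeval f (Set.Icc 0 1)

def FinUnionIcc (S : Set ℝ) : Prop :=
  ∃ (k : ℕ) (a b : Fin k → ℝ), S = ⋃ j, Set.Icc (a j) (b j)

def IsAllocOn {n : ℕ} (C : Set ℝ) (A : Fin n → Set ℝ) : Prop :=
  (∀ i, A i ⊆ C) ∧ (∀ i, FinUnionIcc (A i)) ∧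
    Pairwise fun i j => volume (A i ∩ A j) = 0

def IsAlloc {n : ℕ} (A : Fin n → Set ℝ) : Prop := IsAllocOn (Set.Icc 0 1) A

def CompleteAlloc {n : ℕ} (A : Fin n → Set ℝ) : Prop := (⋃ i, A i) = Set.Icc (0 : ℝ) 1

noncomputable def nashProd {n : ℕ} (f : Fin n → ℝ → ℝ) (A : Fin n → Set ℝ) : ℝ :=
  ∏ i, cakeval (f i) (A i)

def IsMNWOn {n : ℕ} (C : Set ℝ) (f : Fin n → ℝ → ℝ) (A : Fin n → Set ℝ) : Prop :=
  IsAllocOn C A ∧ ∀ B : Fin n → Set ℝ, IsAllocOn C B → nashProd f B ≤ nashProd f A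

def IsMNW {n : ℕ} (f : Fin n → ℝ → ℝ) (A : Fin n → Set ℝ) : Prop :=
  IsMNWOn (Set.Icc 0 1) f A

def IsCompleteMNW {n : ℕ} (f : Fin n → ℝ → ℝ) (A : Fin n → Set ℝ) : Prop :=
  IsAlloc A ∧ CompleteAlloc A ∧
    ∀ B : Fin n → Set ℝ, IsAlloc B → CompleteAlloc B → nashProd f B ≤ nashProd f A

/-- A system of partition points `a 0 = 0 ≤ a 1 ≤ … ≤ a m = 1` of the cake `[0,1]`. -/
def IsPartitionPts (m : ℕ) (a : Fin (m + 1) → ℝ) : Prop :=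
  a 0 = 0 ∧ a (Fin.last m) = 1 ∧ Monotone a

/-- The `t`-th cell of the partition given by the points `a`. -/
def cell {m : ℕ} (a : Fin (m + 1) → ℝ) (t : Fin m) : Set ℝ :=
  Set.Ico (a t.castSucc) (a t.succ)

/-- All the densities `f i` are constant on each cell of the partition, with
constant value `F i t` on cell `t`. -/
def ConstOnCells {n m : ℕ} (f : Fin n → ℝ → ℝ) (a : Fin (m + 1) → ℝ)
    (F : Fin n → Fin m → ℝ) : Prop :=
  ∀ i t, ∀ x ∈ cell a t, f i x = F i t

/-- Weakly MNW allocation on the cake `C`: every agent gets positive value, and for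
every cell `X_t` and every agent `i` whose piece meets `X_t` in positive measure,
`f_i(X_t)/v_i(A_i) ≥ f_j(X_t)/v_j(A_j)` for every agent `j` other than agent 1
(agent 1 being index `0`). -/
def WeaklyMNWOn {n m : ℕ} (C : Set ℝ) (f : Fin (n + 1) → ℝ → ℝ) (a : Fin (m + 1) → ℝ)
    (F : Fin (n + 1) → Fin m → ℝ) (A : Fin (n + 1) → Set ℝ) : Prop :=
  IsAllocOn C A ∧ (∀ i, 0 < cakeval (f i) (A i)) ∧
    ∀ (t : Fin m) (i : Fin (n + 1)), 0 < volume (A i ∩ cell a t) →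
      ∀ j : Fin (n + 1), j ≠ 0 →
        F j t / cakeval (f j) (A j) ≤ F i t / cakeval (f i) (A i)


section AuxLemmas
open Finset


lemma share_kkt {n m : ℕ} (ℓ : Fin m → ℝ) (F : Fin (n+1) → Fin m → ℝ)
    (hF : ∀ i t, 0 ≤ F i t)
    (y : Fin (n+1) → Fin m → ℝ) (hy0 : ∀ i t, 0 ≤ y i t)
    (hw : ∀ i, 0 < ∑ s, F i s * y i s)
    (hopt : ∀ z : Fin (n+1) → Fin m → ℝ, (∀ i t, 0 ≤ z i t) → (∀ t, ∑ i, z i t ≤ ℓ t) →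
      ∏ i, ∑ s, F i s * z i s ≤ ∏ i, ∑ s, F i s * y i s)
    (hys : ∀ t, ∑ i, y i t ≤ ℓ t)
    (t : Fin m) (i : Fin (n+1)) (hyit : 0 < y i t) (j : Fin (n+1)) :
    F j t * (∑ s, F i s * y i s) ≤ F i t * (∑ s, F j s * y j s) := by
  classical
  rcases eq_or_ne j i with rfl | hij
  · ring_nf; exact le_refl _
  by_contra hcon
  push_neg at hcon
  set wi := ∑ s, F i s * y i s with hwi
  set wj := ∑ s, F j s * y j s with hwj
  set c := F j t * wi - F i t * wj with hc
  have hcpos : 0 < c := sub_pos.mpr hcon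
  have hden : 0 < 2 * (F i t * F j t + 1) := by
    have := mul_nonneg (hF i t) (hF j t); linarith
  set ε := min (y i t) (c / (2 * (F i t * F j t + 1))) with hε
  have hεpos : 0 < ε := lt_min hyit (div_pos hcpos hden)
  have hεy : ε ≤ y i t := min_le_left _ _
  set z : Fin (n+1) → Fin m → ℝ := fun k s =>
    y k s + (if k = j ∧ s = t then ε else 0) - (if k = i ∧ s = t then ε else 0) with hz
  have hz0 : ∀ k s, 0 ≤ z k s := by
    intro k s
    simp only [hz]
    by_cases hki : k = i
    · subst hki
      have : ¬ (k = j) := fun h => hij (h.symm ▸ rfl)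
      by_cases hst : s = t
      · subst hst; simp [this]; linarith
      · simp [hst, hy0]
    · by_cases hkj : k = j
      · subst hkj
        by_cases hst : s = t
        · subst hst; simp [hki]; linarith [hy0 k s, hεpos]
        · simp [hst, hki, hy0]
      · simp [hki, hkj, hy0]
  have hzs : ∀ s, ∑ k, z k s ≤ ℓ s := by
    intro s
    have he : ∑ k, z k s = ∑ k, y k s := by
      simp only [hz]
      rw [Finset.sum_sub_distrib, Finset.sum_add_distrib]
      by_cases hst : s = t
      · subst hst
        simp only [and_true]
        rw [Finset.sum_ite_eq' Finset.univ j (fun _ => ε),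
          Finset.sum_ite_eq' Finset.univ i (fun _ => ε)]
        simp
      · simp [hst]
    rw [he]; exact hys s
  -- values of the perturbed shares
  have hvi : (∑ s, F i s * z i s) = wi - F i t * ε := by
    have hterm : ∀ s, F i s * z i s = F i s * y i s - (if s = t then F i s * ε else 0) := by
      intro s
      have hne : ¬ (i = j) := fun h => hij h.symm
      simp only [hz]
      by_cases hst : s = t <;> simp [hne, hst] <;> ring
    rw [Finset.sum_congr rfl (fun s _ => hterm s), Finset.sum_sub_distrib,
      Finset.sum_ite_eq' Finset.univ t (fun s => F i s * ε)]
    simp [hwi]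
  have hvj : (∑ s, F j s * z j s) = wj + F j t * ε := by
    have hterm : ∀ s, F j s * z j s = F j s * y j s + (if s = t then F j s * ε else 0) := by
      intro s
      simp only [hz]
      by_cases hst : s = t <;> simp [hij, hst] <;> ring
    rw [Finset.sum_congr rfl (fun s _ => hterm s), Finset.sum_add_distrib,
      Finset.sum_ite_eq' Finset.univ t (fun s => F j s * ε)]
    simp [hwj]
  have hvk : ∀ k, k ≠ i → k ≠ j → (∑ s, F k s * z k s) = ∑ s, F k s * y k s := by
    intro k hki hkj
    apply Finset.sum_congr rfl
    intro s _
    simp only [hz]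
    simp [hki, hkj]
  -- compare products
  have hsub : ({i, j} : Finset (Fin (n+1))) ⊆ Finset.univ := Finset.subset_univ _
  have hprodz := hopt z hz0 hzs
  have hsplit : ∀ g : Fin (n+1) → ℝ,
      ∏ k, g k = (∏ k ∈ Finset.univ \ {i, j}, g k) * (g i * g j) := by
    intro g
    rw [← Finset.prod_sdiff hsub, Finset.prod_pair (fun h => hij h.symm)]
  have hPpos : 0 < ∏ k ∈ Finset.univ \ {i, j}, ∑ s, F k s * y k s := by
    apply Finset.prod_pos
    intro k _
    exact hw k
  have hrest : ∏ k ∈ Finset.univ \ {i, j}, (∑ s, F k s * z k s)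
      = ∏ k ∈ Finset.univ \ {i, j}, ∑ s, F k s * y k s := by
    apply Finset.prod_congr rfl
    intro k hk
    simp only [Finset.mem_sdiff, Finset.mem_insert, Finset.mem_singleton] at hk
    push_neg at hk
    exact hvk k hk.2.1 hk.2.2
  rw [hsplit (fun k => ∑ s, F k s * z k s), hsplit (fun k => ∑ s, F k s * y k s)] at hprodz
  simp only [hrest] at hprodz
  have hkey : (wi - F i t * ε) * (wj + F j t * ε) ≤ wi * wj := by
    have := (mul_le_mul_iff_right₀ hPpos).mp hprodz
    rw [hvi, hvj] at this
    exact this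
  -- derive the contradiction
  have hexp : c * ε ≤ F i t * F j t * ε ^ 2 := by nlinarith [hkey]
  have hε2 : ε ≤ c / (2 * (F i t * F j t + 1)) := min_le_right _ _
  have hε2' : ε * (2 * (F i t * F j t + 1)) ≤ c := (le_div_iff₀ hden).mp hε2
  nlinarith [hexp, mul_le_mul_of_nonneg_right hε2' hεpos.le, mul_pos hεpos hεpos,
    mul_nonneg (mul_nonneg (hF i t) (hF j t)) (mul_pos hεpos hεpos).le]


lemma core_lemma {n m : ℕ} (ℓ : Fin m → ℝ) (F : Fin (n+1) → Fin m → ℝ)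
    (hF : ∀ i t, 0 ≤ F i t)
    (x y : Fin (n+1) → Fin m → ℝ)
    (hx0 : ∀ i t, 0 ≤ x i t) (hxs : ∀ t, ∑ i, x i t ≤ ℓ t)
    (hy0 : ∀ i t, 0 ≤ y i t) (hys : ∀ t, ∑ i, y i t ≤ ℓ t)
    (hu : ∀ i, 0 < ∑ s, F i s * x i s) (hw : ∀ i, 0 < ∑ s, F i s * y i s)
    (hxcond : ∀ t i, 0 < x i t → ∀ j, j ≠ 0 →
      F j t * (∑ s, F i s * x i s) ≤ F i t * (∑ s, F j s * x j s))
    (hycond : ∀ t i, 0 < y i t → ∀ j,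
      F j t * (∑ s, F i s * y i s) ≤ F i t * (∑ s, F j s * y j s))
    (hopt : ∀ z : Fin (n+1) → Fin m → ℝ, (∀ i t, 0 ≤ z i t) → (∀ t, ∑ i, z i t ≤ ℓ t) →
      ∏ i, ∑ s, F i s * z i s ≤ ∏ i, ∑ s, F i s * y i s) :
    (∑ s, F 0 s * x 0 s) ≤ ∑ s, F 0 s * y 0 s := by
  classical
  set u : Fin (n+1) → ℝ := fun i => ∑ s, F i s * x i s with hudef
  set w : Fin (n+1) → ℝ := fun i => ∑ s, F i s * y i s with hwdef
  by_contra hcontra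
  push_neg at hcontra
  have hlt : w 0 < u 0 := hcontra
  set P : Fin (n+1) → Prop := fun k => k = 0 ∨ u 0 * w k ≤ u k * w 0 with hPdef
  have hP0 : P 0 := Or.inl rfl
  set O : Fin m → ℝ := fun t => ∑ k ∈ Finset.univ.filter (fun k => P k), x k t with hOdef
  set Y : Fin m → ℝ := fun t => ∑ k ∈ Finset.univ.filter (fun k => ¬ P k), y k t with hYdef
  set lam : Fin m → ℝ := fun t => if Y t ≤ ℓ t - O t then 1 else (ℓ t - O t) / Y t with hlamdef
  have hO0 : ∀ t, 0 ≤ O t := fun t => Finset.sum_nonneg fun k _ => hx0 k t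
  have hO_le : ∀ t, O t ≤ ℓ t := by
    intro t
    refine le_trans ?_ (hxs t)
    exact Finset.sum_le_sum_of_subset_of_nonneg (Finset.filter_subset _ _)
      (fun k _ _ => hx0 k t)
  have hY0 : ∀ t, 0 ≤ Y t := fun t => Finset.sum_nonneg fun k _ => hy0 k t
  have hlam0 : ∀ t, 0 ≤ lam t := by
    intro t
    simp only [hlamdef]
    split
    · norm_num
    · next h =>
      push_neg at h
      have hYpos : 0 < Y t := lt_of_le_of_lt (by linarith [hO_le t]) h
      exact div_nonneg (by linarith [hO_le t]) hYpos.le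
  have hlam1 : ∀ t, lam t ≤ 1 := by
    intro t
    simp only [hlamdef]
    split
    · norm_num
    · next h =>
      push_neg at h
      have hYpos : 0 < Y t := lt_of_le_of_lt (by linarith [hO_le t]) h
      exact (div_le_one hYpos).mpr h.le
  set z : Fin (n+1) → Fin m → ℝ := fun k t => if P k then x k t else lam t * y k t with hzdef
  have hz0 : ∀ k t, 0 ≤ z k t := by
    intro k t
    simp only [hzdef]
    split
    · exact hx0 k t
    · exact mul_nonneg (hlam0 t) (hy0 k t)
  have hzs : ∀ t, ∑ k, z k t ≤ ℓ t := by
    intro t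
    rw [← Finset.sum_filter_add_sum_filter_not Finset.univ (fun k => P k) (fun k => z k t)]
    have h1 : ∑ k ∈ Finset.univ.filter (fun k => P k), z k t = O t := by
      apply Finset.sum_congr rfl
      intro k hk
      simp only [Finset.mem_filter] at hk
      simp [hzdef, hk.2]
    have h2 : ∑ k ∈ Finset.univ.filter (fun k => ¬ P k), z k t = lam t * Y t := by
      rw [hYdef, Finset.mul_sum]
      apply Finset.sum_congr rfl
      intro k hk
      simp only [Finset.mem_filter] at hk
      simp [hzdef, hk.2]
    rw [h1, h2]
    have : lam t * Y t ≤ ℓ t - O t := by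
      simp only [hlamdef]
      split
      · next h => linarith
      · next h =>
        push_neg at h
        have hYpos : 0 < Y t := lt_of_le_of_lt (by linarith [hO_le t]) h
        rw [div_mul_cancel₀ _ hYpos.ne']
    linarith
  have hvalP : ∀ k, P k → (∑ s, F k s * z k s) = u k := by
    intro k hk
    apply Finset.sum_congr rfl
    intro s _
    simp [hzdef, hk]
  -- poor agents keep their full y-value
  have hvalpoor : ∀ k, ¬ P k → w k ≤ ∑ s, F k s * z k s := by
    intro k hk
    have hk0 : k ≠ 0 := fun h => hk (Or.inl h)
    apply Finset.sum_le_sum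
    intro s _
    simp only [hzdef, if_neg hk]
    rcases eq_or_lt_of_le (mul_nonneg (hF k s) (hy0 k s)) with heq | hpos
    · rw [← heq]
      exact mul_nonneg (hF k s) (mul_nonneg (hlam0 s) (hy0 k s))
    · have hFks : 0 < F k s := by
        rcases (hF k s).lt_or_eq with h | h
        · exact h
        · exfalso; rw [← h, zero_mul] at hpos; exact lt_irrefl 0 hpos
      have hyks : 0 < y k s := by
        rcases (hy0 k s).lt_or_eq with h | h
        · exact h
        · exfalso; rw [← h, mul_zero] at hpos; exact lt_irrefl 0 hpos
      -- any kept agent has zero x-share in cell s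
      have hOzero : O s = 0 := by
        apply Finset.sum_eq_zero
        intro k' hk'
        simp only [Finset.mem_filter] at hk'
        by_contra hne
        have hxpos : 0 < x k' s := lt_of_le_of_ne (hx0 k' s) (Ne.symm hne)
        rcases hk'.2 with rfl | hrich
        · -- k' = 0
          have h1 : F k s * u 0 ≤ F 0 s * u k := hxcond s 0 hxpos k hk0
          have hF0s : 0 < F 0 s := by
            rcases (hF 0 s).lt_or_eq with h | h
            · exact h
            · exfalso
              rw [← h, zero_mul] at h1
              nlinarith [hu 0]
          have h2 : F 0 s * w k ≤ F k s * w 0 := hycond s k hyks 0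
          have : u 0 * w k ≤ u k * w 0 := by
            nlinarith [mul_le_mul_of_nonneg_right h1 (hw k).le,
              mul_le_mul_of_nonneg_right h2 (hu k).le]
          exact hk (Or.inr this)
        · -- k' is rich
          have h1 : F k s * u k' ≤ F k' s * u k := hxcond s k' hxpos k hk0
          have hFk's : 0 < F k' s := by
            rcases (hF k' s).lt_or_eq with h | h
            · exact h
            · exfalso
              rw [← h, zero_mul] at h1
              nlinarith [hu k']
          have h2 : F k' s * w k ≤ F k s * w k' := hycond s k hyks k'
          have hkk' : u k' * w k ≤ u k * w k' := by
            nlinarith [mul_le_mul_of_nonneg_right h1 (hw k).le,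
              mul_le_mul_of_nonneg_right h2 (hu k).le]
          have : u 0 * w k ≤ u k * w 0 := by
            nlinarith [mul_le_mul_of_nonneg_right hrich (hw k).le,
              mul_le_mul_of_nonneg_right hkk' (hw 0).le, hw k', hu k', hw 0, hu 0]
          exact hk (Or.inr this)
      have hlam_s : lam s = 1 := by
        simp only [hlamdef]
        rw [if_pos]
        rw [hOzero, sub_zero]
        refine le_trans ?_ (hys s)
        exact Finset.sum_le_sum_of_subset_of_nonneg (Finset.filter_subset _ _)
          (fun k _ _ => hy0 k s)
      rw [hlam_s, one_mul]
  -- now compare products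
  have hprod := hopt z hz0 hzs
  set c : Fin (n+1) → ℝ := fun k => if k = 0 then u 0 else w k with hcdef
  have hcpos : ∀ k, 0 < c k := by
    intro k
    simp only [hcdef]
    split
    · exact hu 0
    · exact hw k
  have hcle : ∀ k, c k ≤ ∑ s, F k s * z k s := by
    intro k
    simp only [hcdef]
    split
    · next h => subst h; rw [hvalP 0 hP0]
    · next h =>
      by_cases hPk : P k
      · rw [hvalP k hPk]
        rcases hPk with rfl | hrich
        · exact absurd rfl h
        · nlinarith [hu 0, hw 0, hw k, hu k]
      · exact hvalpoor k hPk
  have hclez : ∏ k, c k ≤ ∏ k, ∑ s, F k s * z k s :=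
    Finset.prod_le_prod (fun k _ => (hcpos k).le) (fun k _ => hcle k)
  have hcbig : ∏ k, w k < ∏ k, c k := by
    rw [Fin.prod_univ_succ c, Fin.prod_univ_succ w]
    have he : ∀ i : Fin n, c i.succ = w i.succ := by
      intro i
      simp [hcdef, Fin.succ_ne_zero i]
    rw [Finset.prod_congr rfl (fun i _ => he i)]
    have hQ : 0 < ∏ i : Fin n, w i.succ := Finset.prod_pos fun i _ => hw i.succ
    have : c 0 = u 0 := by simp [hcdef]
    rw [this]
    exact mul_lt_mul_of_pos_right hlt hQ
  linarith [hclez, hprod, hcbig]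

end AuxLemmas

lemma FinUnionIcc.measurableSet {S : Set ℝ} (h : FinUnionIcc S) : MeasurableSet S := by
  obtain ⟨k, a, b, rfl⟩ := h
  exact MeasurableSet.iUnion fun j => measurableSet_Icc

lemma value_decomp (m : ℕ) (a : Fin (m + 1) → ℝ) (hpart : IsPartitionPts m a)
    (f : ℝ → ℝ) (F : Fin m → ℝ) (hc : ∀ t : Fin m, ∀ x ∈ cell a t, f x = F t)
    (S : Set ℝ) (hS : MeasurableSet S) (hS1 : S ⊆ Set.Icc 0 1) :
    cakeval f S = ∑ t : Fin m, F t * (volume (S ∩ cell a t)).toReal := by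
  obtain ⟨ha0, halast, hmono⟩ := hpart
  -- integrability and value over initial segments
  have key : ∀ k : ℕ, ∀ hk : k ≤ m,
      IntegrableOn f (S ∩ Set.Ico (a 0) (a ⟨k, Nat.lt_succ_of_le hk⟩)) volume ∧
      ∫ x in S ∩ Set.Ico (a 0) (a ⟨k, Nat.lt_succ_of_le hk⟩), f x
        = ∑ t ∈ Finset.range k,
            (if h : t < m then F ⟨t, h⟩ * (volume (S ∩ cell a ⟨t, h⟩)).toReal else 0) := by
    intro k
    induction k with
    | zero =>
      intro hk
      have : (⟨0, Nat.lt_succ_of_le hk⟩ : Fin (m+1)) = 0 := rfl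
      rw [this]
      simp [Set.Ico_self]
    | succ k ih =>
      intro hk
      have hk' : k ≤ m := Nat.le_of_succ_le hk
      have hkm : k < m := hk
      set t : Fin m := ⟨k, hkm⟩ with ht
      have hcs : t.castSucc = ⟨k, Nat.lt_succ_of_le hk'⟩ := rfl
      have hsucc : t.succ = ⟨k+1, Nat.lt_succ_of_le hk⟩ := rfl
      have h0k : a 0 ≤ a t.castSucc := hmono (Fin.zero_le _)
      have hks : a t.castSucc ≤ a t.succ := hmono (le_of_lt (Fin.castSucc_lt_succ (i := t)))
      have hsplitIco : Set.Ico (a 0) (a t.succ)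
          = Set.Ico (a 0) (a t.castSucc) ∪ Set.Ico (a t.castSucc) (a t.succ) :=
        (Set.Ico_union_Ico_eq_Ico h0k hks).symm
      have hsplit : S ∩ Set.Ico (a 0) (a ⟨k+1, Nat.lt_succ_of_le hk⟩)
          = (S ∩ Set.Ico (a 0) (a ⟨k, Nat.lt_succ_of_le hk'⟩)) ∪ (S ∩ cell a t) := by
        rw [← hcs, ← hsucc, hsplitIco, Set.inter_union_distrib_left]
        rfl
      have hmeas_cell : MeasurableSet (S ∩ cell a t) := hS.inter measurableSet_Ico
      have hvolfin : volume (S ∩ cell a t) < ⊤ := by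
        refine lt_of_le_of_lt (measure_mono (Set.inter_subset_right)) ?_
        rw [cell, Real.volume_Ico]
        exact ENNReal.ofReal_lt_top
      have hint_cell : IntegrableOn f (S ∩ cell a t) volume := by
        have hconst : IntegrableOn (fun _ => F t) (S ∩ cell a t) volume :=
          integrableOn_const hvolfin.ne
        exact hconst.congr_fun (fun x hx => (hc t x hx.2).symm) hmeas_cell
      have hdisj : Disjoint (S ∩ Set.Ico (a 0) (a ⟨k, Nat.lt_succ_of_le hk'⟩)) (S ∩ cell a t) := by
        refine Disjoint.mono Set.inter_subset_right Set.inter_subset_right ?_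
        rw [← hcs]
        exact Set.Ico_disjoint_Ico_same
      obtain ⟨ih_int, ih_val⟩ := ih hk'
      constructor
      · rw [hsplit]
        exact ih_int.union hint_cell
      · rw [hsplit, setIntegral_union hdisj hmeas_cell ih_int hint_cell, ih_val,
          Finset.sum_range_succ]
        congr 1
        rw [dif_pos hkm]
        calc ∫ x in S ∩ cell a t, f x = ∫ _x in S ∩ cell a t, F t :=
              setIntegral_congr_fun hmeas_cell (fun x hx => hc t x hx.2)
          _ = F ⟨k, hkm⟩ * (volume (S ∩ cell a ⟨k, hkm⟩)).toReal := by
              rw [setIntegral_const]; rw [smul_eq_mul, mul_comm]; rfl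
  obtain ⟨_, hval⟩ := key m le_rfl
  have hlast : (⟨m, Nat.lt_succ_of_le le_rfl⟩ : Fin (m+1)) = Fin.last m := rfl
  rw [hlast, ha0, halast] at hval
  -- decompose S itself
  have hSsplit : S = (S ∩ Set.Ico (0:ℝ) 1) ∪ (S ∩ {1}) := by
    calc S = S ∩ (Set.Ico (0:ℝ) 1 ∪ {1}) := by
            rw [Set.Ico_union_right zero_le_one]
            exact (Set.inter_eq_self_of_subset_left hS1).symm
      _ = (S ∩ Set.Ico (0:ℝ) 1) ∪ (S ∩ {1}) := Set.inter_union_distrib_left ..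
  have hnull : volume (S ∩ {(1:ℝ)}) = 0 :=
    measure_mono_null Set.inter_subset_right (measure_singleton 1)
  have hrest0 : Measure.restrict volume (S ∩ {(1:ℝ)}) = 0 :=
    Measure.restrict_eq_zero.mpr hnull
  have hint1 : IntegrableOn f (S ∩ {(1:ℝ)}) volume := by
    rw [IntegrableOn, hrest0]
    exact integrable_zero_measure
  have hdisj2 : Disjoint (S ∩ Set.Ico (0:ℝ) 1) (S ∩ {1}) := by
    refine Disjoint.mono Set.inter_subset_right Set.inter_subset_right ?_
    simp [Set.disjoint_singleton_right]
  have hint0 : IntegrableOn f (S ∩ Set.Ico (0:ℝ) 1) volume := by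
    have h := (key m le_rfl).1
    rw [hlast, ha0, halast] at h
    exact h
  have hz : (∫ x in S ∩ {(1:ℝ)}, f x) = 0 := by
    rw [hrest0]
    exact integral_zero_measure f
  have hmain : cakeval f S = (∫ x in S ∩ Set.Ico (0:ℝ) 1, f x) + ∫ x in S ∩ {(1:ℝ)}, f x := by
    rw [cakeval]
    conv_lhs => rw [hSsplit]
    exact setIntegral_union hdisj2 (hS.inter (measurableSet_singleton 1)) hint0 hint1
  rw [hmain, hz, add_zero, hval]
  rw [← Fin.sum_univ_eq_sum_range
    (fun t => if h : t < m then F ⟨t, h⟩ * (volume (S ∩ cell a ⟨t, h⟩)).toReal else 0) m]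
  apply Finset.sum_congr rfl
  intro t _
  rw [dif_pos t.isLt]

lemma realize_shares {n m : ℕ} (a : Fin (m + 1) → ℝ) (hpart : IsPartitionPts m a)
    (z : Fin (n+1) → Fin m → ℝ) (hz0 : ∀ i t, 0 ≤ z i t)
    (hzs : ∀ t, ∑ i, z i t ≤ a t.succ - a t.castSucc) :
    ∃ Z : Fin (n+1) → Set ℝ, IsAllocOn (Set.Icc 0 1) Z ∧
      ∀ i t, volume (Z i ∩ cell a t) = ENNReal.ofReal (z i t) := by
  classical
  obtain ⟨ha0, halast, hmono⟩ := hpart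
  set L : Fin (n+1) → Fin m → ℝ :=
    fun i t => a t.castSucc + ∑ k ∈ Finset.univ.filter (fun k => k < i), z k t with hL
  set R : Fin (n+1) → Fin m → ℝ := fun i t => L i t + z i t with hR
  set Z : Fin (n+1) → Set ℝ := fun i => ⋃ t, Set.Icc (L i t) (R i t) with hZ
  have hoff0 : ∀ i t, 0 ≤ ∑ k ∈ Finset.univ.filter (fun k => k < i), z k t :=
    fun i t => Finset.sum_nonneg fun k _ => hz0 k t
  have hsum_le : ∀ (i : Fin (n+1)) t,
      (∑ k ∈ Finset.univ.filter (fun k => k < i), z k t) + z i t ≤ ∑ k, z k t := by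
    intro i t
    have hsubset : insert i (Finset.univ.filter (fun k => k < i)) ⊆ Finset.univ :=
      Finset.subset_univ _
    have hnotmem : i ∉ Finset.univ.filter (fun k => k < i) := by simp
    have := Finset.sum_le_sum_of_subset_of_nonneg hsubset
      (fun k _ _ => hz0 k t)
    rw [Finset.sum_insert hnotmem] at this
    linarith
  have hRle : ∀ i t, R i t ≤ a t.succ := by
    intro i t
    have := hsum_le i t
    have h2 := hzs t
    simp only [hR, hL]
    linarith
  have hLge : ∀ i t, a t.castSucc ≤ L i t := by
    intro i t
    simp only [hL]
    linarith [hoff0 i t]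
  have hLR : ∀ i t, L i t ≤ R i t := by
    intro i t
    simp only [hR]
    linarith [hz0 i t]
  have hpiece_sub : ∀ i t, Set.Icc (L i t) (R i t) ⊆ Set.Icc (a t.castSucc) (a t.succ) :=
    fun i t => Set.Icc_subset_Icc (hLge i t) (hRle i t)
  -- pieces in increasing agent order within a cell
  have horder : ∀ (i j : Fin (n+1)) t, i < j → R i t ≤ L j t := by
    intro i j t hij
    simp only [hR, hL]
    have hsub2 : insert i (Finset.univ.filter (fun k => k < i)) ⊆
        Finset.univ.filter (fun k => k < j) := by
      intro k hk
      rcases Finset.mem_insert.mp hk with rfl | hk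
      · simp [hij]
      · simp only [Finset.mem_filter] at hk ⊢
        exact ⟨Finset.mem_univ _, lt_trans hk.2 hij⟩
    have hnotmem : i ∉ Finset.univ.filter (fun k => k < i) := by simp
    have := Finset.sum_le_sum_of_subset_of_nonneg hsub2 (fun k _ _ => hz0 k t)
    rw [Finset.sum_insert hnotmem] at this
    linarith
  -- cross-cell bound : pieces in cell s, objects in cell t with s ≠ t have null overlap
  have hcells_le : ∀ (s t : Fin m), s < t → a s.succ ≤ a t.castSucc := by
    intro s t hst
    apply hmono
    rw [Fin.le_def]
    simp only [Fin.val_succ, Fin.coe_castSucc]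
    exact hst
  have hcross : ∀ (i j : Fin (n+1)) (s t : Fin m), s ≠ t →
      volume (Set.Icc (L i s) (R i s) ∩ Set.Icc (a t.castSucc) (a t.succ)) = 0 := by
    intro i j s t hst
    rcases lt_or_gt_of_ne hst with h | h
    · have hsub : Set.Icc (L i s) (R i s) ∩ Set.Icc (a t.castSucc) (a t.succ) ⊆
          Set.Icc (a t.castSucc) (a s.succ) := by
        intro x hx
        exact ⟨hx.2.1, (hpiece_sub i s hx.1).2⟩
      refine measure_mono_null hsub ?_
      rw [Real.volume_Icc]
      rw [ENNReal.ofReal_eq_zero]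
      linarith [hcells_le s t h]
    · have hsub : Set.Icc (L i s) (R i s) ∩ Set.Icc (a t.castSucc) (a t.succ) ⊆
          Set.Icc (a s.castSucc) (a t.succ) := by
        intro x hx
        exact ⟨(hpiece_sub i s hx.1).1, hx.2.2⟩
      refine measure_mono_null hsub ?_
      rw [Real.volume_Icc, ENNReal.ofReal_eq_zero]
      linarith [hcells_le t s h]
  refine ⟨Z, ⟨?_, ?_, ?_⟩, ?_⟩
  · -- Z i ⊆ Icc 0 1
    intro i
    simp only [hZ]
    apply Set.iUnion_subset
    intro t
    refine (hpiece_sub i t).trans (Set.Icc_subset_Icc ?_ ?_)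
    · rw [← ha0]; exact hmono (Fin.zero_le _)
    · rw [← halast]; exact hmono (Fin.le_last _)
  · -- FinUnionIcc
    intro i
    exact ⟨m, L i, R i, rfl⟩
  · -- pairwise null overlaps
    intro i j hij
    simp only [hZ]
    have : (⋃ t, Set.Icc (L i t) (R i t)) ∩ ⋃ t, Set.Icc (L j t) (R j t)
        ⊆ ⋃ s, ⋃ t, Set.Icc (L i s) (R i s) ∩ Set.Icc (L j t) (R j t) := by
      rintro x ⟨hx1, hx2⟩
      rw [Set.mem_iUnion] at hx1 hx2
      obtain ⟨s, hs⟩ := hx1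
      obtain ⟨t, ht⟩ := hx2
      exact Set.mem_iUnion.mpr ⟨s, Set.mem_iUnion.mpr ⟨t, hs, ht⟩⟩
    refine measure_mono_null this (measure_iUnion_null fun s => measure_iUnion_null fun t => ?_)
    rcases eq_or_ne s t with rfl | hst
    · have hsame : ∀ (i' j' : Fin (n+1)), i' < j' →
          volume (Set.Icc (L i' s) (R i' s) ∩ Set.Icc (L j' s) (R j' s)) = 0 := by
        intro i' j' h
        have hsub : Set.Icc (L i' s) (R i' s) ∩ Set.Icc (L j' s) (R j' s)
            ⊆ Set.Icc (L j' s) (R i' s) := fun x hx => ⟨hx.2.1, hx.1.2⟩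
        refine measure_mono_null hsub ?_
        rw [Real.volume_Icc, ENNReal.ofReal_eq_zero]
        linarith [horder i' j' s h]
      rcases lt_or_gt_of_ne hij with h | h
      · exact hsame i j h
      · rw [Set.inter_comm]
        exact hsame j i h
    · exact measure_mono_null (Set.inter_subset_inter_right _ (hpiece_sub j t))
        (hcross i j s t hst)
  · -- the measures of the traces on cells
    intro i t
    have hsub1 : Set.Ico (L i t) (R i t) ⊆ Z i ∩ cell a t := by
      intro x hx
      constructor
      · simp only [hZ]
        exact Set.mem_iUnion.mpr ⟨t, hx.1, hx.2.le⟩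
      · exact ⟨le_trans (hLge i t) hx.1, lt_of_lt_of_le hx.2 (hRle i t)⟩
    have hsub2 : Z i ∩ cell a t ⊆ ⋃ s, (Set.Icc (L i s) (R i s) ∩ cell a t) := by
      rintro x ⟨hx1, hx2⟩
      simp only [hZ] at hx1
      rw [Set.mem_iUnion] at hx1
      obtain ⟨s, hs⟩ := hx1
      exact Set.mem_iUnion.mpr ⟨s, hs, hx2⟩
    have hup : volume (Z i ∩ cell a t) ≤ ENNReal.ofReal (z i t) := by
      refine le_trans (measure_mono hsub2) (le_trans (measure_iUnion_le _) ?_)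
      rw [tsum_fintype]
      have hterm : ∀ s, volume (Set.Icc (L i s) (R i s) ∩ cell a t)
          ≤ if s = t then ENNReal.ofReal (z i t) else 0 := by
        intro s
        split
        · next h =>
          subst h
          refine le_trans (measure_mono Set.inter_subset_left) ?_
          rw [Real.volume_Icc, hR]
          simp
        · next h =>
          refine le_of_eq ?_
          refine measure_mono_null (Set.inter_subset_inter_right _ ?_) (hcross i i s t h)
          exact fun x hx => ⟨hx.1, hx.2.le⟩
      refine le_trans (Finset.sum_le_sum fun s _ => hterm s) ?_
      rw [Finset.sum_ite_eq' Finset.univ t (fun _ => ENNReal.ofReal (z i t))]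
      simp
    have hlow : ENNReal.ofReal (z i t) ≤ volume (Z i ∩ cell a t) := by
      refine le_trans (le_of_eq ?_) (measure_mono hsub1)
      rw [Real.volume_Ico, hR]
      simp
    exact le_antisymm hup hlow

/-- Lemma 3.2: the maximum value agent 1 (index `0`) receives among all weakly MNW
allocations equals the value agent 1 receives in an MNW allocation: every weakly MNW
allocation gives agent 1 at most his MNW value, and every MNW allocation is itself
weakly MNW (so the bound is attained). -/
theorem weakly_mnw_value_eq_mnw_value (n m : ℕ) (f : Fin (n + 1) → ℝ → ℝ)
    (hf : ∀ i, ValidDensity (f i))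
    (a : Fin (m + 1) → ℝ) (F : Fin (n + 1) → Fin m → ℝ)
    (hpart : IsPartitionPts m a) (hconst : ConstOnCells f a F)
    (B : Fin (n + 1) → Set ℝ) (hB : IsMNW f B) :
    (∀ A : Fin (n + 1) → Set ℝ, WeaklyMNWOn (Set.Icc 0 1) f a F A →
        cakeval (f 0) (A 0) ≤ cakeval (f 0) (B 0)) ∧
      WeaklyMNWOn (Set.Icc 0 1) f a F B := by
  classical
  obtain ⟨hBalloc, hBopt⟩ := hB
  obtain ⟨ha0, halast, hmono⟩ := hpart
  set ℓ : Fin m → ℝ := fun t => a t.succ - a t.castSucc with hℓdef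
  have hℓ0 : ∀ t, 0 ≤ ℓ t := fun t => sub_nonneg.mpr (hmono (Fin.castSucc_lt_succ (i := t)).le)
  set G : Fin (n+1) → Fin m → ℝ :=
    fun i t => if a t.castSucc < a t.succ then F i t else 0 with hGdef
  have hcell_sub : ∀ t, cell a t ⊆ Set.Icc (0:ℝ) 1 := by
    intro t x hx
    constructor
    · rw [← ha0]; exact le_trans (hmono (Fin.zero_le _)) hx.1
    · rw [← halast]; exact le_of_lt (lt_of_lt_of_le hx.2 (hmono (Fin.le_last _)))
  have hG : ∀ i t, 0 ≤ G i t := by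
    intro i t
    simp only [hGdef]
    split
    · next h =>
      rw [← hconst i t (a t.castSucc) ⟨le_refl _, h⟩]
      exact (hf i).2.1 _
    · exact le_refl 0
  have hGconst : ∀ i t, ∀ x ∈ cell a t, f i x = G i t := by
    intro i t x hx
    have hlt : a t.castSucc < a t.succ := lt_of_le_of_lt hx.1 hx.2
    simp only [hGdef, if_pos hlt]
    exact hconst i t x hx
  have hGF : ∀ (t : Fin m), a t.castSucc < a t.succ → ∀ i, G i t = F i t := by
    intro t hlt i
    simp only [hGdef, if_pos hlt]
  -- total value of the whole cake
  have hvol_cell : ∀ t, volume (Set.Icc (0:ℝ) 1 ∩ cell a t) = ENNReal.ofReal (ℓ t) := by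
    intro t
    rw [Set.inter_eq_self_of_subset_right (hcell_sub t), cell, Real.volume_Ico]
  have htot : ∀ i, cakeval (f i) (Set.Icc 0 1) = ∑ t, G i t * ℓ t := by
    intro i
    rw [value_decomp m a ⟨ha0, halast, hmono⟩ (f i) (G i) (hGconst i) _ measurableSet_Icc
      (subset_refl _)]
    apply Finset.sum_congr rfl
    intro t _
    rw [hvol_cell t, ENNReal.toReal_ofReal (hℓ0 t)]
  -- shares of an allocation
  have hfin : ∀ (A : Fin (n+1) → Set ℝ), (∀ i, A i ⊆ Set.Icc 0 1) →
      ∀ i t, volume (A i ∩ cell a t) ≠ ⊤ := by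
    intro A hA i t
    refine ne_top_of_le_ne_top ?_ (measure_mono (Set.inter_subset_left.trans (hA i)))
    rw [Real.volume_Icc]
    exact ENNReal.ofReal_ne_top
  have hshares : ∀ (A : Fin (n+1) → Set ℝ), IsAllocOn (Set.Icc 0 1) A →
      ((∀ i t, 0 ≤ (volume (A i ∩ cell a t)).toReal) ∧
       (∀ t, ∑ i, (volume (A i ∩ cell a t)).toReal ≤ ℓ t) ∧
       (∀ i, cakeval (f i) (A i) = ∑ t, G i t * (volume (A i ∩ cell a t)).toReal)) := by
    intro A hA
    obtain ⟨hA1, hA2, hA3⟩ := hA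
    refine ⟨fun i t => ENNReal.toReal_nonneg, ?_, ?_⟩
    · intro t
      have hmeas : ∀ i, NullMeasurableSet (A i ∩ cell a t) volume :=
        fun i => (((hA2 i).measurableSet).inter measurableSet_Ico).nullMeasurableSet
      have hdisj : Pairwise (Function.onFun (MeasureTheory.AEDisjoint volume) fun i => A i ∩ cell a t) := by
        intro i j hij
        refine measure_mono_null ?_ (hA3 hij)
        intro x hx
        exact ⟨hx.1.1, hx.2.1⟩
      have hunion := MeasureTheory.measure_iUnion₀ hdisj hmeas
      have hle : volume (⋃ i, A i ∩ cell a t) ≤ ENNReal.ofReal (ℓ t) := by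
        have h1 : volume (⋃ i, A i ∩ cell a t) ≤ volume (cell a t) :=
          measure_mono (Set.iUnion_subset fun i => Set.inter_subset_right)
        rw [cell, Real.volume_Ico] at h1
        exact h1
      rw [hunion, tsum_fintype] at hle
      have hsumfin : ∀ i ∈ Finset.univ, volume (A i ∩ cell a t) ≠ ⊤ :=
        fun i _ => hfin A hA1 i t
      calc ∑ i, (volume (A i ∩ cell a t)).toReal
          = (∑ i, volume (A i ∩ cell a t)).toReal := (ENNReal.toReal_sum hsumfin).symm
        _ ≤ (ENNReal.ofReal (ℓ t)).toReal := ENNReal.toReal_mono ENNReal.ofReal_ne_top hle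
        _ = ℓ t := ENNReal.toReal_ofReal (hℓ0 t)
    · intro i
      exact value_decomp m a ⟨ha0, halast, hmono⟩ (f i) (G i) (hGconst i) _
        ((hA2 i).measurableSet) (hA1 i)
  -- the shares of B
  set y : Fin (n+1) → Fin m → ℝ := fun i t => (volume (B i ∩ cell a t)).toReal with hydef
  obtain ⟨hy0, hys, hyval⟩ := hshares B hBalloc
  set w : Fin (n+1) → ℝ := fun i => ∑ t, G i t * y i t with hwdef
  have hwB : ∀ i, cakeval (f i) (B i) = w i := hyval
  -- optimality over shares
  have hopt : ∀ z : Fin (n+1) → Fin m → ℝ, (∀ i t, 0 ≤ z i t) → (∀ t, ∑ i, z i t ≤ ℓ t) →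
      ∏ i, ∑ s, G i s * z i s ≤ ∏ i, ∑ s, G i s * y i s := by
    intro z hz0 hzs
    obtain ⟨Z, hZalloc, hZvol⟩ := realize_shares a ⟨ha0, halast, hmono⟩ z hz0 hzs
    have hZval : ∀ i, cakeval (f i) (Z i) = ∑ s, G i s * z i s := by
      intro i
      rw [(hshares Z hZalloc).2.2 i]
      apply Finset.sum_congr rfl
      intro t _
      rw [hZvol i t, ENNReal.toReal_ofReal (hz0 i t)]
    have := hBopt Z hZalloc
    rw [nashProd, nashProd] at this
    calc ∏ i, ∑ s, G i s * z i s = ∏ i, cakeval (f i) (Z i) := by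
          exact Finset.prod_congr rfl fun i _ => (hZval i).symm
      _ ≤ ∏ i, cakeval (f i) (B i) := this
      _ = ∏ i, ∑ s, G i s * y i s := Finset.prod_congr rfl fun i _ => hwB i
  -- positivity of the MNW values
  have hwpos : ∀ i, 0 < ∑ s, G i s * y i s := by
    intro i
    by_contra hcon
    push_neg at hcon
    have hw0 : (∑ s, G i s * y i s) = 0 := le_antisymm hcon
      (Finset.sum_nonneg fun s _ => mul_nonneg (hG i s) (hy0 i s))
    have hprod0 : ∏ j, ∑ s, G j s * y j s = 0 :=
      Finset.prod_eq_zero (Finset.mem_univ i) hw0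
    set zstar : Fin (n+1) → Fin m → ℝ := fun _ t => ℓ t / (n+1) with hzstar
    have hz0' : ∀ i t, 0 ≤ zstar i t :=
      fun i t => div_nonneg (hℓ0 t) (by positivity)
    have hzs' : ∀ t, ∑ i, zstar i t ≤ ℓ t := by
      intro t
      have hc : ((n:ℝ)+1) ≠ 0 := by positivity
      rw [Finset.sum_const, Finset.card_univ, Fintype.card_fin, nsmul_eq_mul,
        Nat.cast_add, Nat.cast_one, mul_comm, div_mul_cancel₀ _ hc]
    have hvalstar : ∀ j, (∑ s, G j s * zstar j s) = cakeval (f j) (Set.Icc 0 1) / (n+1) := by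
      intro j
      rw [htot j, Finset.sum_div]
      apply Finset.sum_congr rfl
      intro s _
      rw [hzstar]
      rw [mul_div_assoc]
    have hpos : 0 < ∏ j, ∑ s, G j s * zstar j s := by
      apply Finset.prod_pos
      intro j _
      rw [hvalstar j]
      exact div_pos (hf j).2.2 (by positivity)
    have := hopt zstar hz0' hzs'
    rw [hprod0] at this
    linarith
  -- the KKT conditions for B
  have hkkt := fun t i hyit j => share_kkt ℓ G hG y hy0 hwpos hopt hys t i hyit j
  have hvolpos_iff : ∀ (A : Fin (n+1) → Set ℝ), (∀ i, A i ⊆ Set.Icc 0 1) →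
      ∀ i t, 0 < volume (A i ∩ cell a t) ↔ 0 < (volume (A i ∩ cell a t)).toReal := by
    intro A hA i t
    constructor
    · intro h
      exact ENNReal.toReal_pos (ne_of_gt h) (hfin A hA i t)
    · intro h
      by_contra hcon
      push_neg at hcon
      have : volume (A i ∩ cell a t) = 0 := le_antisymm hcon (zero_le ..)
      rw [this] at h
      simp at h
  have hcell_pos : ∀ (S : Set ℝ) (t : Fin m), 0 < volume (S ∩ cell a t) →
      a t.castSucc < a t.succ := by
    intro S t h
    by_contra hcon
    push_neg at hcon
    have : cell a t = ∅ := Set.Ico_eq_empty (not_lt.mpr hcon)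
    rw [cell] at this
    rw [show S ∩ cell a t = ∅ by rw [cell, this]; exact Set.inter_empty S] at h
    simp at h
  constructor
  · -- part 1 : every weakly MNW allocation gives agent 0 at most the MNW value
    intro A hA
    obtain ⟨hAalloc, hApos, hAcond⟩ := hA
    set x : Fin (n+1) → Fin m → ℝ := fun i t => (volume (A i ∩ cell a t)).toReal with hxdef
    obtain ⟨hx0, hxs, hxval⟩ := hshares A hAalloc
    have hupos : ∀ i, 0 < ∑ s, G i s * x i s := by
      intro i
      rw [← hxval i]
      exact hApos i
    have hxcond : ∀ t i, 0 < x i t → ∀ j, j ≠ 0 →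
        G j t * (∑ s, G i s * x i s) ≤ G i t * (∑ s, G j s * x j s) := by
      intro t i hxit j hj
      have hvol : 0 < volume (A i ∩ cell a t) :=
        (hvolpos_iff A hAalloc.1 i t).mpr hxit
      have hlt : a t.castSucc < a t.succ := hcell_pos (A i) t hvol
      have hcond := hAcond t i hvol j hj
      rw [hGF t hlt i, hGF t hlt j, ← hxval i, ← hxval j]
      exact (div_le_div_iff₀ (hApos j) (hApos i)).mp hcond
    have hcore := core_lemma ℓ G hG x y hx0 hxs hy0 hys hupos hwpos hxcond hkkt hopt
    rw [hxval 0, hwB 0]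
    exact hcore
  · -- part 2 : B itself is weakly MNW
    refine ⟨hBalloc, fun i => by rw [hwB i]; exact hwpos i, ?_⟩
    intro t i hvol j hj
    have hyit : 0 < y i t := (hvolpos_iff B hBalloc.1 i t).mp hvol
    have hlt : a t.castSucc < a t.succ := hcell_pos (B i) t hvol
    have h := hkkt t i hyit j
    rw [hGF t hlt i, hGF t hlt j] at h
    have hwj : 0 < cakeval (f j) (B j) := by rw [hwB j]; exact hwpos j
    have hwi : 0 < cakeval (f i) (B i) := by rw [hwB i]; exact hwpos i
    rw [div_le_div_iff₀ hwj hwi, hyval i, hyval j]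
    exact h
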